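/- Let (A,d) be an N-differential graded algebra (d^N = 0) and e a degree-one derivation on A. Let t be a formal parameter with t² = 0 (work over k[t]/(t²), extending d and e t-linearly). Then (d + te)^N = t · Σ_{k=0}^{N−1} ( Σ_{p ∈ Par(k, N−k+1)} (−1)^{w(p)} ) · d^{N−k−1}(e) ∘ d^{k}, where Par(k,m) = { p = (p₁,…,p_m) ∈ ℕ^m : Σᵢ pᵢ = k }, w(p) = Σ_{i=1}^{m} (i−1)pᵢ, and d^{j}(e) denotes the j-th iterated graded commutator of d with e. -/

import Mathlib

/-- `dIter d e j` is the `j`-th iterated graded commutator `d^{(j)}(e)` of the degree-one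
derivation `d` with the degree-one derivation `e`:  `dIter d e 0 = e` and
`d^{j+1}(e) = d ∘ d^{j}(e) − (−1)^{j+1} d^{j}(e) ∘ d` (since `d^{j}(e)` has degree `j+1`). -/
def dIter {K A : Type*} [Field K] [Ring A] [Algebra K A]
    (d e : Module.End K A) : ℕ → Module.End K A
  | 0 => e
  | j + 1 => d * dIter d e j - ((-1 : ℤ) ^ (j + 1)) • (dIter d e j * d)

/-- `Par(k, m)` from the paper: the tuples `p : Fin m → ℕ` with `∑ pᵢ = k`, and for each
such `p` the sign `(−1)^{w(p)}` with `w(p) = Σᵢ (i−1)pᵢ` (one-based), summed up. -/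
def parSignSum (k m : ℕ) : ℤ :=
  ∑ p ∈ Finset.Nat.antidiagonalTuple m k, (-1 : ℤ) ^ (∑ i : Fin m, (i : ℕ) * p i)

open Finset in
lemma parSignSum_snoc (k m : ℕ) :
    parSignSum k (m + 1)
      = ∑ ab ∈ Finset.HasAntidiagonal.antidiagonal k, (-1 : ℤ) ^ (m * ab.1) * parSignSum ab.2 m := by
  unfold parSignSum
  simp_rw [Finset.mul_sum, ← pow_add]
  rw [Finset.sum_sigma']
  refine Finset.sum_nbij' (i := fun p => ⟨(p (Fin.last m), ∑ i : Fin m, p i.castSucc), Fin.init p⟩)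
    (j := fun x => Fin.snoc x.2 x.1.1) ?_ ?_ ?_ ?_ ?_
  · intro p hp
    rw [Finset.Nat.mem_antidiagonalTuple] at hp
    refine Finset.mem_sigma.2 ⟨?_, ?_⟩
    · rw [Finset.HasAntidiagonal.mem_antidiagonal]
      rw [← hp, Fin.sum_univ_castSucc]; ring
    · rw [Finset.Nat.mem_antidiagonalTuple]; rfl
  · intro x hx
    rw [Finset.mem_sigma] at hx
    rw [Finset.Nat.mem_antidiagonalTuple]
    rw [Fin.sum_univ_castSucc]
    simp only [Fin.snoc_castSucc, Fin.snoc_last]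
    rw [Finset.Nat.mem_antidiagonalTuple.1 hx.2]
    have := Finset.HasAntidiagonal.mem_antidiagonal.1 hx.1
    omega
  · intro p hp
    simp [Fin.snoc_init_self]
  · intro x hx
    rw [Finset.mem_sigma] at hx
    obtain ⟨⟨a, b⟩, q⟩ := x
    have hb : ∑ i, q i = b := Finset.Nat.mem_antidiagonalTuple.1 hx.2
    simp [Fin.init_snoc, Fin.snoc_last, Fin.snoc_castSucc, hb]
  · intro p hp
    congr 1
    rw [Fin.sum_univ_castSucc]
    simp only [Fin.coe_castSucc, Fin.val_last, Fin.init]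
    ring

lemma parSignSum_zero_left (m : ℕ) : parSignSum 0 m = 1 := by
  unfold parSignSum
  rw [Finset.Nat.antidiagonalTuple_zero_right]
  simp

lemma parSignSum_one_right (k : ℕ) : parSignSum k 1 = 1 := by
  unfold parSignSum
  rw [Finset.Nat.antidiagonalTuple_one]
  simp

lemma parSignSum_rec (k m : ℕ) :
    parSignSum (k + 1) (m + 1)
      = parSignSum (k + 1) m + (-1 : ℤ) ^ m * parSignSum k (m + 1) := by
  rw [parSignSum_snoc (k + 1) m, Finset.Nat.antidiagonal_succ, Finset.sum_cons,
    Finset.sum_map]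
  simp only [Function.Embedding.coeFn_mk, Function.Embedding.prodMap, Function.Embedding.refl]
  rw [parSignSum_snoc k m, Finset.mul_sum]
  simp only [mul_zero, pow_zero, one_mul]
  congr 1
  apply Finset.sum_congr rfl
  intro ab _
  rw [← mul_assoc, ← pow_add]
  congr 2
  simp [Prod.map, Nat.succ_eq_add_one]; ring

section Operators

variable {K A : Type*} [Field K] [Ring A] [Algebra K A]

lemma d_mul_dIter (d e : Module.End K A) (j : ℕ) :
    d * dIter d e j = dIter d e (j + 1) + ((-1 : ℤ) ^ (j + 1)) • (dIter d e j * d) := by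
  rw [dIter]
  abel

open TrivSqZeroExt MulOpposite in
lemma dn_pow (x y : Module.End K A) (N : ℕ) :
    ((TrivSqZeroExt.inl x : DualNumber (Module.End K A)) + DualNumber.eps * TrivSqZeroExt.inl y) ^ N
      = TrivSqZeroExt.inl (x ^ N)
        + TrivSqZeroExt.inr (∑ k ∈ Finset.range N, x ^ (N - 1 - k) * y * x ^ k) := by
  have heps : (DualNumber.eps * TrivSqZeroExt.inl y : DualNumber (Module.End K A)) = inr y := by
    rw [DualNumber.eps, inr_mul_inl]
    simp
  rw [heps]
  induction N with
  | zero => simp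
  | succ N ih =>
    have hS : ∑ k ∈ Finset.range (N + 1), x ^ (N + 1 - 1 - k) * y * x ^ k
        = x * ∑ k ∈ Finset.range N, x ^ (N - 1 - k) * y * x ^ k + y * x ^ N := by
      rw [Finset.mul_sum, Finset.sum_range_succ]
      refine congrArg₂ (fun a b : Module.End K A => a + b) ?_ ?_
      · apply Finset.sum_congr rfl
        intro i hi
        have hi' := Finset.mem_range.1 hi
        rw [← mul_assoc, ← mul_assoc, ← pow_succ']
        congr 3
        omega
      · rw [show N + 1 - 1 - N = 0 by omega, pow_zero, one_mul]
    rw [pow_succ', ih, add_mul, mul_add, mul_add, inl_mul_inl, inl_mul_inr, inr_mul_inl,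
      inr_mul_inr]
    rw [← pow_succ', hS]
    rw [add_zero, add_assoc, ← inr_add, op_smul_eq_mul, smul_eq_mul]

lemma rhs_step (d e : Module.End K A) (N : ℕ) :
    ∑ k ∈ Finset.range (N + 1), parSignSum k (N + 1 - k + 1) • (dIter d e (N + 1 - k - 1) * d ^ k)
      = d * (∑ k ∈ Finset.range N, parSignSum k (N - k + 1) • (dIter d e (N - k - 1) * d ^ k))
        + e * d ^ N := by
  have hU1 : (∑ k ∈ Finset.range (N + 1), parSignSum k (N - k + 1) • (dIter d e (N - k) * d ^ k))
      = (∑ k ∈ Finset.range N, parSignSum k (N - k + 1) • (dIter d e (N - k) * d ^ k))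
        + e * d ^ N := by
    rw [Finset.sum_range_succ, Nat.sub_self, parSignSum_one_right, one_smul]
    rfl
  have hU2 : (∑ k ∈ Finset.range (N + 1), parSignSum k (N - k + 1) • (dIter d e (N - k) * d ^ k))
      = (∑ i ∈ Finset.range N, parSignSum (i + 1) (N - i) • (dIter d e (N - i - 1) * d ^ (i + 1)))
        + parSignSum 0 (N + 1) • (dIter d e N) := by
    rw [Finset.sum_range_succ']
    congr 1
    · apply Finset.sum_congr rfl
      intro i hi
      have hi' := Finset.mem_range.1 hi
      rw [show N - (i + 1) + 1 = N - i by omega, show N - (i + 1) = N - i - 1 by omega]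
  have hdS : d * (∑ k ∈ Finset.range N, parSignSum k (N - k + 1) • (dIter d e (N - k - 1) * d ^ k))
      = (∑ k ∈ Finset.range N, parSignSum k (N - k + 1) • (dIter d e (N - k) * d ^ k))
        + ∑ k ∈ Finset.range N,
            ((-1 : ℤ) ^ (N - k) * parSignSum k (N - k + 1)) • (dIter d e (N - k - 1) * d ^ (k + 1)) := by
    rw [Finset.mul_sum, ← Finset.sum_add_distrib]
    apply Finset.sum_congr rfl
    intro k hk
    have hk' := Finset.mem_range.1 hk
    rw [mul_smul_comm, ← mul_assoc, d_mul_dIter d e (N - k - 1),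
      show N - k - 1 + 1 = N - k by omega]
    rw [add_mul, smul_mul_assoc, smul_add, smul_smul, mul_comm (parSignSum k (N - k + 1)),
      mul_assoc, ← pow_succ']
  have hsplit : ∑ k ∈ Finset.range (N + 1),
        parSignSum k (N + 1 - k + 1) • (dIter d e (N + 1 - k - 1) * d ^ k)
      = ((∑ i ∈ Finset.range N, parSignSum (i + 1) (N - i) • (dIter d e (N - i - 1) * d ^ (i + 1)))
          + ∑ i ∈ Finset.range N,
              ((-1 : ℤ) ^ (N - i) * parSignSum i (N - i + 1)) • (dIter d e (N - i - 1) * d ^ (i + 1)))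
        + parSignSum 0 (N + 2) • (dIter d e N) := by
    rw [Finset.sum_range_succ', ← Finset.sum_add_distrib]
    congr 1
    · apply Finset.sum_congr rfl
      intro i hi
      have hi' := Finset.mem_range.1 hi
      rw [show N + 1 - (i + 1) + 1 = (N - i) + 1 by omega,
        show N + 1 - (i + 1) - 1 = N - i - 1 by omega,
        parSignSum_rec i (N - i), add_smul]
  rw [hsplit, hdS]
  rw [parSignSum_zero_left, one_smul]
  have h1 : (∑ i ∈ Finset.range N, parSignSum (i + 1) (N - i) • (dIter d e (N - i - 1) * d ^ (i + 1)))
      + dIter d e N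
      = (∑ k ∈ Finset.range N, parSignSum k (N - k + 1) • (dIter d e (N - k) * d ^ k)) + e * d ^ N := by
    rw [← hU1, hU2, parSignSum_zero_left, one_smul]
  calc (∑ i ∈ Finset.range N, parSignSum (i + 1) (N - i) • (dIter d e (N - i - 1) * d ^ (i + 1))
          + ∑ i ∈ Finset.range N,
              ((-1 : ℤ) ^ (N - i) * parSignSum i (N - i + 1)) • (dIter d e (N - i - 1) * d ^ (i + 1)))
        + dIter d e N
      = ((∑ i ∈ Finset.range N, parSignSum (i + 1) (N - i) • (dIter d e (N - i - 1) * d ^ (i + 1)))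
          + dIter d e N)
        + ∑ i ∈ Finset.range N,
            ((-1 : ℤ) ^ (N - i) * parSignSum i (N - i + 1)) • (dIter d e (N - i - 1) * d ^ (i + 1)) := by
        abel
    _ = ((∑ k ∈ Finset.range N, parSignSum k (N - k + 1) • (dIter d e (N - k) * d ^ k)) + e * d ^ N)
        + ∑ i ∈ Finset.range N,
            ((-1 : ℤ) ^ (N - i) * parSignSum i (N - i + 1)) • (dIter d e (N - i - 1) * d ^ (i + 1)) := by
        rw [h1]
    _ = ((∑ k ∈ Finset.range N, parSignSum k (N - k + 1) • (dIter d e (N - k) * d ^ k))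
          + ∑ k ∈ Finset.range N,
              ((-1 : ℤ) ^ (N - k) * parSignSum k (N - k + 1)) • (dIter d e (N - k - 1) * d ^ (k + 1)))
        + e * d ^ N := by
        abel

lemma key (d e : Module.End K A) (N : ℕ) :
    ∑ k ∈ Finset.range N, d ^ (N - 1 - k) * e * d ^ k
      = ∑ k ∈ Finset.range N, parSignSum k (N - k + 1) • (dIter d e (N - k - 1) * d ^ k) := by
  induction N with
  | zero => simp
  | succ N ih =>
    have hL : ∑ k ∈ Finset.range (N + 1), d ^ (N + 1 - 1 - k) * e * d ^ k
        = d * ∑ k ∈ Finset.range N, d ^ (N - 1 - k) * e * d ^ k + e * d ^ N := by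
      rw [Finset.mul_sum, Finset.sum_range_succ]
      refine congrArg₂ (fun a b : Module.End K A => a + b) ?_ ?_
      · apply Finset.sum_congr rfl
        intro i hi
        have hi' := Finset.mem_range.1 hi
        rw [← mul_assoc, ← mul_assoc, ← pow_succ']
        congr 3
        omega
      · rw [show N + 1 - 1 - N = 0 by omega, pow_zero, one_mul]
    rw [hL, ih, rhs_step]

end Operators

/-- Let `(A,d)` be an `N`-dga (`d^N = 0`) and `e` a degree-one derivation
on `A`.  Let `t` be a formal parameter with `t² = 0` (working over `k[t]/(t²)`, i.e. in the
dual numbers over `End(A)`, extending `d` and `e` `t`-linearly).  Then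
`(d + te)^N = t · Σ_{k=0}^{N−1} ( Σ_{p ∈ Par(k, N−k+1)} (−1)^{w(p)} ) · d^{N−k−1}(e) ∘ d^k`. -/
theorem infinitesimal_deformation_formula
    {K A : Type*} [Field K] [Ring A] [Algebra K A]
    (𝒜 : ℤ → Submodule K A) [GradedAlgebra 𝒜]
    (d e : Module.End K A)
    (hd_deg : ∀ (i : ℤ), ∀ a ∈ 𝒜 i, d a ∈ 𝒜 (i + 1))
    (he_deg : ∀ (i : ℤ), ∀ a ∈ 𝒜 i, e a ∈ 𝒜 (i + 1))
    (hd_leib : ∀ (i : ℤ), ∀ a ∈ 𝒜 i, ∀ b : A,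
      d (a * b) = d a * b + ((i.negOnePow : ℤ)) • (a * d b))
    (he_leib : ∀ (i : ℤ), ∀ a ∈ 𝒜 i, ∀ b : A,
      e (a * b) = e a * b + ((i.negOnePow : ℤ)) • (a * e b))
    (N : ℕ) (hN : 1 ≤ N) (hdN : d ^ N = 0) :
    ((TrivSqZeroExt.inl d : DualNumber (Module.End K A))
        + DualNumber.eps * TrivSqZeroExt.inl e) ^ N
      = DualNumber.eps * TrivSqZeroExt.inl
          (∑ k ∈ Finset.range N,
            parSignSum k (N - k + 1) • (dIter d e (N - k - 1) * d ^ k)) := by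
  have heps : (DualNumber.eps * TrivSqZeroExt.inl
        (∑ k ∈ Finset.range N, parSignSum k (N - k + 1) • (dIter d e (N - k - 1) * d ^ k))
      : DualNumber (Module.End K A))
      = TrivSqZeroExt.inr
        (∑ k ∈ Finset.range N, parSignSum k (N - k + 1) • (dIter d e (N - k - 1) * d ^ k)) := by
    rw [DualNumber.eps, TrivSqZeroExt.inr_mul_inl]
    simp
  rw [dn_pow d e N, hdN, heps, TrivSqZeroExt.inl_zero, zero_add]
  exact congrArg _ (key d e N)
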